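/- There exists ε > 0 such that for all f ∈ (0, ε): E(D^(M)(f,·)) = Σ_{n=1}^N D_n^{(M,N)}·log(1 + f·t_n/t̂), where D_n^{(M,N)} := Σ p_1^{x_1}···p_N^{x_N}·(M!/(x_1!···x_N!))·x_n ≥ 0, the sum running over all (x_1,…,x_N) ∈ ℕ_0^N with Σ_{i=1}^N x_i = M and Σ_{i=1}^N x_i·t_i ≤ 0. -/

import Mathlib

open scoped Classical

open Finset

lemma count_card (N M : ℕ) (x : Fin N → ℕ) (hx : ∑ i, x i = M) :
    (Finset.univ.filter (fun ω : Fin M → Fin N =>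
      ∀ i, (Finset.univ.filter (fun j => ω j = i)).card = x i)).card
      = Nat.multinomial Finset.univ x := by
  classical
  have key : ∑ ω : Fin M → Fin N, ∏ j, (MvPolynomial.X (ω j) : MvPolynomial (Fin N) ℕ)
      = ∑ k ∈ piAntidiag (univ : Finset (Fin N)) M,
          (Nat.multinomial univ k : MvPolynomial (Fin N) ℕ) * ∏ i, MvPolynomial.X i ^ k i := by
    rw [← Fintype.sum_pow, Finset.sum_pow_eq_sum_piAntidiag]
  set m : Fin N →₀ ℕ := Finsupp.equivFunOnFinite.symm x with hm
  have h1 : ∀ ω : Fin M → Fin N, (∏ j, (MvPolynomial.X (ω j) : MvPolynomial (Fin N) ℕ))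
      = MvPolynomial.monomial (∑ j, Finsupp.single (ω j) 1) 1 := by
    intro ω
    rw [MvPolynomial.monomial_sum_one]
    refine Finset.prod_congr rfl fun j _ => ?_
    rw [← MvPolynomial.X_pow_eq_monomial, pow_one]
  have h2 : ∀ k : Fin N → ℕ, (∏ i, (MvPolynomial.X i : MvPolynomial (Fin N) ℕ) ^ k i)
      = MvPolynomial.monomial (Finsupp.equivFunOnFinite.symm k) 1 := by
    intro k
    rw [← MvPolynomial.prod_X_pow_eq_monomial]
    refine (Finset.prod_subset (Finset.subset_univ _) fun i _ hi => ?_).symm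
    simp only [Finsupp.notMem_support_iff] at hi
    simp only [Finsupp.equivFunOnFinite_symm_apply_apply] at hi ⊢
    rw [hi, pow_zero]
  have hcoeff := congrArg (MvPolynomial.coeff m) key
  rw [MvPolynomial.coeff_sum, MvPolynomial.coeff_sum] at hcoeff
  have hL : ∑ ω : Fin M → Fin N,
      MvPolynomial.coeff m (∏ j, (MvPolynomial.X (ω j) : MvPolynomial (Fin N) ℕ))
      = (Finset.univ.filter (fun ω : Fin M → Fin N =>
          ∀ i, (Finset.univ.filter (fun j => ω j = i)).card = x i)).card := by
    have happ : ∀ (ω : Fin M → Fin N) (i : Fin N),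
        (∑ j, Finsupp.single (ω j) 1) i = (Finset.univ.filter (fun j => ω j = i)).card := by
      intro ω i
      rw [Finsupp.finset_sum_apply, Finset.card_filter]
      refine Finset.sum_congr rfl fun j _ => ?_
      rw [Finsupp.single_apply]
    rw [Finset.card_filter]
    refine Finset.sum_congr rfl fun ω _ => ?_
    rw [h1 ω, MvPolynomial.coeff_monomial]
    congr 1
    simp only [eq_iff_iff]
    constructor
    · intro h i
      rw [← happ, h, hm, Finsupp.equivFunOnFinite_symm_apply_apply]
    · intro h
      ext i
      rw [happ, h i, hm, Finsupp.equivFunOnFinite_symm_apply_apply]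
  have hR : ∑ k ∈ piAntidiag (univ : Finset (Fin N)) M,
      MvPolynomial.coeff m ((Nat.multinomial univ k : MvPolynomial (Fin N) ℕ)
        * ∏ i, MvPolynomial.X i ^ k i) = Nat.multinomial Finset.univ x := by
    have hxmem : x ∈ piAntidiag (univ : Finset (Fin N)) M := by
      rw [Finset.mem_piAntidiag]
      exact ⟨hx, fun i _ => Finset.mem_univ i⟩
    rw [Finset.sum_eq_single_of_mem x hxmem]
    · rw [h2, ← map_natCast (MvPolynomial.C (σ := Fin N)), MvPolynomial.coeff_C_mul,
        MvPolynomial.coeff_monomial, if_pos rfl, mul_one, Nat.cast_id]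
    · intro k _ hk
      rw [h2, ← map_natCast (MvPolynomial.C (σ := Fin N)), MvPolynomial.coeff_C_mul,
        MvPolynomial.coeff_monomial, if_neg, mul_zero]
      intro h
      exact hk (Finsupp.equivFunOnFinite.symm.injective (by rw [h, hm]))
  rw [hL, hR] at hcoeff
  exact hcoeff

lemma group_count (N M : ℕ) (G : (Fin N → ℕ) → ℝ) :
    ∑ ω : Fin M → Fin N, G (fun i => ((Finset.univ.filter (fun j => ω j = i)).card))
    = ∑ x ∈ Finset.univ.filter (fun x : Fin N → Fin (M+1) => (∑ i, (x i : ℕ)) = M),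
        (Nat.multinomial Finset.univ (fun i => (x i : ℕ)) : ℝ) * G (fun i => (x i : ℕ)) := by
  classical
  have hsum : ∀ ω : Fin M → Fin N,
      ∑ i, (Finset.univ.filter (fun j => ω j = i)).card = M := by
    intro ω
    rw [← Finset.card_eq_sum_card_fiberwise (fun j _ => Finset.mem_univ (ω j)),
      Finset.card_univ, Fintype.card_fin]
  set cmap : (Fin M → Fin N) → (Fin N → Fin (M+1)) := fun ω i =>
    ⟨(Finset.univ.filter (fun j => ω j = i)).card,
      Nat.lt_succ_of_le (by simpa using (Finset.card_filter_le Finset.univ (fun j => ω j = i)))⟩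
    with hcmap
  have hmaps : ∀ ω ∈ (Finset.univ : Finset (Fin M → Fin N)),
      cmap ω ∈ Finset.univ.filter (fun x : Fin N → Fin (M+1) => (∑ i, (x i : ℕ)) = M) := by
    intro ω _
    rw [Finset.mem_filter]
    exact ⟨Finset.mem_univ _, hsum ω⟩
  rw [← Finset.sum_fiberwise_of_maps_to hmaps
    (fun ω => G (fun i => ((Finset.univ.filter (fun j => ω j = i)).card)))]
  refine Finset.sum_congr rfl fun x hx => ?_
  rw [Finset.mem_filter] at hx
  have hfib : Finset.univ.filter (fun ω : Fin M → Fin N => cmap ω = x)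
      = Finset.univ.filter (fun ω : Fin M → Fin N =>
          ∀ i, (Finset.univ.filter (fun j => ω j = i)).card = (x i : ℕ)) := by
    refine Finset.filter_congr fun ω _ => ?_
    rw [funext_iff]
    exact forall_congr' fun i => Fin.ext_iff
  have hconst : ∀ ω ∈ Finset.univ.filter (fun ω : Fin M → Fin N => cmap ω = x),
      G (fun i => ((Finset.univ.filter (fun j => ω j = i)).card)) = G (fun i => (x i : ℕ)) := by
    intro ω hω
    rw [Finset.mem_filter] at hω
    congr 1
    funext i
    rw [← hω.2]
  rw [Finset.sum_congr rfl hconst, Finset.sum_const, hfib,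
    count_card N M (fun i => (x i : ℕ)) hx.2, nsmul_eq_mul]

lemma pos_log_sum (M : ℕ) (c : Fin M → ℝ) (hc : 0 < ∑ j, c j) :
    ∃ ε > 0, ∀ f : ℝ, 0 < f → f < ε → 0 < ∑ j, Real.log (1 + f * c j) := by
  have hder : HasDerivAt (fun f : ℝ => ∑ j, Real.log (1 + f * c j)) (∑ j, c j) 0 := by
    refine HasDerivAt.fun_sum fun j _ => ?_
    have h1 : HasDerivAt (fun f : ℝ => 1 + f * c j) (c j) 0 := by
      simpa using ((hasDerivAt_id 0).mul_const (c j)).const_add 1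
    have h2 := h1.log (by norm_num)
    simpa using h2
  have hs := hasDerivAt_iff_tendsto_slope.mp hder
  have hs' : Filter.Tendsto (slope (fun f : ℝ => ∑ j, Real.log (1 + f * c j)) 0)
      (nhdsWithin 0 (Set.Ioi 0)) (nhds (∑ j, c j)) :=
    hs.mono_left (nhdsWithin_mono 0 (fun x hx => ne_of_gt hx))
  have hev : ∀ᶠ f in nhdsWithin (0:ℝ) (Set.Ioi 0),
      0 < slope (fun f : ℝ => ∑ j, Real.log (1 + f * c j)) 0 f :=
    hs'.eventually (lt_mem_nhds hc)
  rw [eventually_nhdsWithin_iff] at hev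
  rw [Metric.eventually_nhds_iff] at hev
  obtain ⟨ε, hε, H⟩ := hev
  refine ⟨ε, hε, fun f hf hf' => ?_⟩
  have hd : dist f 0 < ε := by
    rw [Real.dist_eq, sub_zero, abs_of_pos hf]; exact hf'
  have := H hd hf
  rw [slope_def_field] at this
  simp only [sub_zero] at this
  have h0 : (∑ j, Real.log (1 + (0:ℝ) * c j)) = 0 := by simp
  rw [h0, sub_zero] at this
  have := mul_pos this hf
  rwa [div_mul_cancel₀] at this
  exact ne_of_gt hf

lemma sum_comp_count {N M : ℕ} (ω : Fin M → Fin N) (h : Fin N → ℝ) :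
    ∑ j, h (ω j)
      = ∑ i, (((Finset.univ.filter (fun j => ω j = i)).card : ℕ) : ℝ) * h i := by
  classical
  rw [← Finset.sum_fiberwise_of_maps_to (fun j _ => Finset.mem_univ (ω j)) (fun j => h (ω j))]
  refine Finset.sum_congr rfl fun i _ => ?_
  rw [Finset.sum_congr rfl (fun j hj => by rw [(Finset.mem_filter.mp hj).2]),
    Finset.sum_const, nsmul_eq_mul]

lemma prod_comp_count {N M : ℕ} (ω : Fin M → Fin N) (h : Fin N → ℝ) :
    ∏ j, h (ω j)
      = ∏ i, h i ^ ((Finset.univ.filter (fun j => ω j = i)).card : ℕ) := by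
  classical
  rw [← Finset.prod_fiberwise_of_maps_to (fun j _ => Finset.mem_univ (ω j)) (fun j => h (ω j))]
  refine Finset.prod_congr rfl fun i _ => ?_
  rw [Finset.prod_congr rfl (fun j hj => by rw [(Finset.mem_filter.mp hj).2]),
    Finset.prod_const]

/-- For sufficiently small `f > 0`, `E(D^(M)(f,·)) = ∑ₙ Dₙ^{(M,N)}·log(1 + f·tₙ/t̂)`, where
`Dₙ^{(M,N)} = ∑ p₁^{x₁}⋯p_N^{x_N}·(M!/(x₁!⋯x_N!))·xₙ` over all `(x₁,…,x_N) ∈ ℕ₀^N`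
with `∑ xᵢ = M` and `∑ xᵢ·tᵢ ≤ 0`. -/
theorem stmt_9 (N : ℕ) (hN : 1 ≤ N) (t : Fin N → ℝ) (ht : ∀ i, t i ≠ 0)
    (hneg : ∃ i, t i < 0) (that : ℝ)
    (hthat : IsGreatest {x : ℝ | ∃ i, t i < 0 ∧ x = |t i|} that)
    (hthat_pos : 0 < that)
    (p : Fin N → ℝ) (hp : ∀ i, 0 < p i) (hpsum : ∑ i, p i = 1)
    (M : ℕ) (hM : 1 ≤ M)
    (D : Fin N → ℝ)
    (hD : ∀ n, D n =
      ∑ x ∈ Finset.univ.filter (fun x : Fin N → Fin (M + 1) =>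
          (∑ i, (x i : ℕ)) = M ∧ (∑ i, ((x i : ℕ) : ℝ) * t i) ≤ 0),
        (∏ i, p i ^ (x i : ℕ)) *
          (Nat.multinomial Finset.univ (fun i => (x i : ℕ)) : ℝ) * ((x n : ℕ) : ℝ)) :
    ∃ ε > 0, ∀ f : ℝ, 0 < f → f < ε →
      ∑ ω : Fin M → Fin N,
          (∏ j, p (ω j)) * Real.log (min 1 (∏ j, (1 + f * t (ω j) / that)))
        = ∑ n, D n * Real.log (1 + f * t n / that) := by
  classical
  have hNE : Nonempty (Fin N) := ⟨⟨0, hN⟩⟩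
  have hEps : ∀ ω : Fin M → Fin N, ∃ ε > 0, ∀ f : ℝ, 0 < f → f < ε →
      (0 < ∑ j, t (ω j)) → 0 < ∑ j, Real.log (1 + f * t (ω j) / that) := by
    intro ω
    by_cases h : 0 < ∑ j, t (ω j)
    · obtain ⟨ε, hε, H⟩ := pos_log_sum M (fun j => t (ω j) / that)
        (by rw [← Finset.sum_div]; exact div_pos h hthat_pos)
      refine ⟨ε, hε, fun f hf hf' _ => ?_⟩
      have := H f hf hf'
      simpa [mul_div_assoc] using this
    · exact ⟨1, one_pos, fun f _ _ h' => absurd h' h⟩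
  choose εf hεf hprop using hEps
  have hune : (Finset.univ : Finset (Fin M → Fin N)).Nonempty := Finset.univ_nonempty
  refine ⟨min 1 (Finset.univ.inf' hune εf),
    lt_min one_pos ((Finset.lt_inf'_iff hune).mpr fun ω _ => hεf ω), fun f hf hfε => ?_⟩
  have hf1 : f < 1 := lt_of_lt_of_le hfε (min_le_left _ _)
  have hfω : ∀ ω : Fin M → Fin N, f < εf ω := fun ω =>
    lt_of_lt_of_le hfε (le_trans (min_le_right _ _) (Finset.inf'_le εf (Finset.mem_univ ω)))
  have hfac : ∀ i, 0 < 1 + f * t i / that := by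
    intro i
    rcases (ht i).lt_or_gt with hti | hti
    · have habs : -t i ≤ that := by
        have h1 := hthat.2 ⟨i, hti, rfl⟩
        rwa [abs_of_neg hti] at h1
      have h1 : f * (-t i) ≤ f * that := mul_le_mul_of_nonneg_left habs hf.le
      have h2 : f * (-t i) / that ≤ f * that / that := (div_le_div_iff_of_pos_right hthat_pos).mpr h1
      have h3 : f * that / that = f := mul_div_cancel_right₀ f (ne_of_gt hthat_pos)
      have h4 : f * t i / that = -(f * (-t i) / that) := by ring
      rw [h4]
      rw [h3] at h2
      linarith
    · have h1 : 0 < f * t i / that := div_pos (mul_pos hf hti) hthat_pos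
      linarith
  have hpoint : ∀ ω : Fin M → Fin N,
      (∏ j, p (ω j)) * Real.log (min 1 (∏ j, (1 + f * t (ω j) / that)))
      = (if (∑ i, (((Finset.univ.filter (fun j => ω j = i)).card : ℕ) : ℝ) * t i) ≤ 0
          then (∏ i, p i ^ ((Finset.univ.filter (fun j => ω j = i)).card : ℕ))
            * (∑ i, (((Finset.univ.filter (fun j => ω j = i)).card : ℕ) : ℝ)
                * Real.log (1 + f * t i / that))
          else 0) := by
    intro ω
    have hfacω : ∀ j : Fin M, 0 < 1 + f * t (ω j) / that := fun j => hfac (ω j)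
    have hprodpos : 0 < ∏ j, (1 + f * t (ω j) / that) :=
      Finset.prod_pos (fun j _ => hfacω j)
    have hlogprod : Real.log (∏ j, (1 + f * t (ω j) / that))
        = ∑ j, Real.log (1 + f * t (ω j) / that) :=
      Real.log_prod (fun j _ => (hfacω j).ne')
    have hcond : (∑ i, (((Finset.univ.filter (fun j => ω j = i)).card : ℕ) : ℝ) * t i)
        = ∑ j, t (ω j) := (sum_comp_count ω t).symm
    by_cases hω : (∑ j, t (ω j)) ≤ 0
    · rw [if_pos (by rw [hcond]; exact hω)]
      have hlog : Real.log (∏ j, (1 + f * t (ω j) / that)) ≤ 0 := by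
        rw [hlogprod]
        calc ∑ j, Real.log (1 + f * t (ω j) / that) ≤ ∑ j, f * t (ω j) / that :=
              Finset.sum_le_sum (fun j _ => by
                have h5 := Real.log_le_sub_one_of_pos (hfacω j); linarith)
          _ = f * (∑ j, t (ω j)) / that := by rw [← Finset.sum_div, ← Finset.mul_sum]
          _ ≤ 0 := div_nonpos_iff.mpr (Or.inr ⟨by nlinarith, hthat_pos.le⟩)
      have hle : (∏ j, (1 + f * t (ω j) / that)) ≤ 1 :=
        (Real.log_nonpos_iff hprodpos.le).mp hlog
      rw [min_eq_right hle, hlogprod, prod_comp_count ω p,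
        sum_comp_count ω (fun i => Real.log (1 + f * t i / that))]
    · push_neg at hω
      rw [if_neg (by rw [hcond]; exact not_le.mpr hω)]
      have h1 : 0 < Real.log (∏ j, (1 + f * t (ω j) / that)) := by
        rw [hlogprod]; exact hprop ω f hf (hfω ω) hω
      have h2 : 1 < ∏ j, (1 + f * t (ω j) / that) :=
        (Real.log_pos_iff hprodpos.le).mp h1
      rw [min_eq_left h2.le, Real.log_one, mul_zero]
  calc ∑ ω : Fin M → Fin N,
        (∏ j, p (ω j)) * Real.log (min 1 (∏ j, (1 + f * t (ω j) / that)))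
      = ∑ ω : Fin M → Fin N,
          (fun x : Fin N → ℕ =>
            if (∑ i, ((x i : ℕ) : ℝ) * t i) ≤ 0 then
              (∏ i, p i ^ x i) * (∑ i, ((x i : ℕ) : ℝ) * Real.log (1 + f * t i / that))
            else 0) (fun i => ((Finset.univ.filter (fun j => ω j = i)).card)) :=
        Finset.sum_congr rfl (fun ω _ => hpoint ω)
    _ = ∑ x ∈ Finset.univ.filter (fun x : Fin N → Fin (M+1) => (∑ i, (x i : ℕ)) = M),
          (Nat.multinomial Finset.univ (fun i => (x i : ℕ)) : ℝ) *
          (if (∑ i, ((x i : ℕ) : ℝ) * t i) ≤ 0 then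
              (∏ i, p i ^ (x i : ℕ)) * (∑ i, ((x i : ℕ) : ℝ) * Real.log (1 + f * t i / that))
            else 0) := group_count N M (fun x : Fin N → ℕ =>
              if (∑ i, ((x i : ℕ) : ℝ) * t i) ≤ 0 then
                (∏ i, p i ^ x i) *
                  (∑ i, ((x i : ℕ) : ℝ) * Real.log (1 + f * t i / that))
              else 0)
    _ = ∑ x ∈ Finset.univ.filter (fun x : Fin N → Fin (M + 1) =>
          (∑ i, (x i : ℕ)) = M ∧ (∑ i, ((x i : ℕ) : ℝ) * t i) ≤ 0),
          (Nat.multinomial Finset.univ (fun i => (x i : ℕ)) : ℝ) *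
            ((∏ i, p i ^ (x i : ℕ)) *
              (∑ i, ((x i : ℕ) : ℝ) * Real.log (1 + f * t i / that))) := by
        rw [← Finset.filter_filter, Finset.sum_filter (s := Finset.univ.filter
          (fun x : Fin N → Fin (M+1) => (∑ i, (x i : ℕ)) = M))]
        refine Finset.sum_congr rfl fun x _ => ?_
        rw [mul_ite, mul_zero]
    _ = ∑ n, D n * Real.log (1 + f * t n / that) := by
        have hswap : ∀ x : Fin N → Fin (M+1),
            (Nat.multinomial Finset.univ (fun i => (x i : ℕ)) : ℝ) *
              ((∏ i, p i ^ (x i : ℕ)) *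
                (∑ i, ((x i : ℕ) : ℝ) * Real.log (1 + f * t i / that)))
            = ∑ n, ((∏ i, p i ^ (x i : ℕ)) *
                (Nat.multinomial Finset.univ (fun i => (x i : ℕ)) : ℝ) * ((x n : ℕ) : ℝ))
                * Real.log (1 + f * t n / that) := by
          intro x
          rw [Finset.mul_sum, Finset.mul_sum]
          exact Finset.sum_congr rfl fun n _ => by ring
        rw [Finset.sum_congr rfl (fun x _ => hswap x), Finset.sum_comm]
        refine Finset.sum_congr rfl fun n _ => ?_
        rw [hD n, Finset.sum_mul]
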